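/- For ρ_sep = (1/4)·[[1,0,0,0],[0,1,1,0],[0,1,1,0],[0,0,0,1]], every decomposition into pure states of definite total particle number has average entanglement at least 1/2 and average SiV at least 1/2, with equality attained; i.e., E_F^SSR(ρ_sep) = 1/2 and V_F^SSR(ρ_sep) = 1/2. -/

import Mathlib

open Matrix

/-- Outer product `|ψ⟩⟨ψ|`. -/
noncomputable def outer {ι : Type*} (ψ : ι → ℂ) : Matrix ι ι ℂ :=
  Matrix.of fun a b => ψ a * star (ψ b)

/-- Von Neumann entropy (base 2) of a Hermitian matrix, via its eigenvalues. -/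
noncomputable def vnEntropy {ι : Type*} [Fintype ι] [DecidableEq ι]
    (ρ : Matrix ι ι ℂ) : ℝ :=
  if h : ρ.IsHermitian then -∑ i, h.eigenvalues i * Real.logb 2 (h.eigenvalues i)
  else 0

/-- Entropy of entanglement of a bipartite vector: entropy of `tr_B |χ⟩⟨χ|`. -/
noncomputable def entE {A B : Type*} [Fintype A] [Fintype B] [DecidableEq A]
    (χ : A × B → ℂ) : ℝ :=
  vnEntropy (Matrix.of fun a a' => ∑ b, χ (a, b) * star (χ (a', b)))

/-- Superselection induced variance of a normalized two-qubit state,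
`V = 4(⟨N_A²⟩ − ⟨N_A⟩²)` with `N_A` the particle number of the first qubit. -/
noncomputable def siv (ψ : Fin 2 × Fin 2 → ℂ) : ℝ :=
  4 * ((∑ p, ((p.1 : ℕ) : ℝ) ^ 2 * Complex.normSq (ψ p)) -
       (∑ p, ((p.1 : ℕ) : ℝ) * Complex.normSq (ψ p)) ^ 2)

/-- SSR-compatible pure-state decompositions of `ρ`: nonnegative weights and
normalized pure states, each of definite total particle number. -/
def IsSSRDecomp (ρ : Matrix (Fin 2 × Fin 2) (Fin 2 × Fin 2) ℂ)
    {k : ℕ} (q : Fin k → ℝ) (ψ : Fin k → Fin 2 × Fin 2 → ℂ) : Prop :=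
  (∀ i, 0 ≤ q i) ∧ (∀ i, ∑ p, Complex.normSq (ψ i p) = 1) ∧
  (∀ i, ∃ c : ℕ, ∀ p : Fin 2 × Fin 2, (p.1 : ℕ) + (p.2 : ℕ) ≠ c → ψ i p = 0) ∧
  ρ = ∑ i, (q i : ℂ) • outer (ψ i)

/-- The separable-but-nonlocal state `ρ_sep`. -/
noncomputable def rhoSep : Matrix (Fin 2 × Fin 2) (Fin 2 × Fin 2) ℂ :=
  Matrix.of fun p q =>
    if p = q ∧ (p = (0, 0) ∨ p = (1, 1)) then (1 / 4 : ℂ)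
    else if (p = (0, 1) ∨ p = (1, 0)) ∧ (q = (0, 1) ∨ q = (1, 0)) then (1 / 4 : ℂ)
    else 0


/-! ### Auxiliary lemmas -/

section Aux

lemma eig_proj {ι : Type*} [Fintype ι] [DecidableEq ι] {M : Matrix ι ι ℂ}
    (hM : M.IsHermitian) (hproj : M * M = M) (i : ι) :
    hM.eigenvalues i = 0 ∨ hM.eigenvalues i = 1 := by
  set l := hM.eigenvalues i with hl
  have hv : (⇑(hM.eigenvectorBasis i) : ι → ℂ) ≠ 0 := by
    intro h
    exact hM.eigenvectorBasis.orthonormal.ne_zero i (by ext j; exact congrFun h j)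
  obtain ⟨j, hj⟩ := Function.ne_iff.mp hv
  have hj' : (hM.eigenvectorBasis i j : ℂ) ≠ 0 := hj
  have h1 := hM.mulVec_eigenvectorBasis i
  have h2 : (M * M) *ᵥ ⇑(hM.eigenvectorBasis i) = l • (l • ⇑(hM.eigenvectorBasis i)) := by
    rw [← Matrix.mulVec_mulVec, h1, Matrix.mulVec_smul, h1]
  rw [hproj, h1] at h2
  have h3 := congrFun h2 j
  simp only [Pi.smul_apply, Complex.real_smul] at h3
  have h3' : (l:ℂ) * (hM.eigenvectorBasis i j) = l * (l * hM.eigenvectorBasis i j) := h3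
  have h4 : ((l:ℂ) - l*l) * (hM.eigenvectorBasis i j) = 0 := by linear_combination h3'
  rcases mul_eq_zero.mp h4 with h | h
  · have h5 : l - l*l = 0 := by exact_mod_cast h
    rcases mul_eq_zero.mp (show l*(l-1) = 0 by nlinarith) with h6 | h6
    · exact Or.inl h6
    · exact Or.inr (by linarith)
  · exact absurd h hj'

lemma eig_scalar {c : ℝ} (i : Fin 2)
    (hM : ((c:ℂ) • (1 : Matrix (Fin 2) (Fin 2) ℂ)).IsHermitian) :
    hM.eigenvalues i = c := by
  set l := hM.eigenvalues i with hl
  have hv : (⇑(hM.eigenvectorBasis i) : Fin 2 → ℂ) ≠ 0 := by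
    intro h
    exact hM.eigenvectorBasis.orthonormal.ne_zero i (by ext j; exact congrFun h j)
  obtain ⟨j, hj⟩ := Function.ne_iff.mp hv
  have hj' : (hM.eigenvectorBasis i j : ℂ) ≠ 0 := hj
  have h1 := hM.mulVec_eigenvectorBasis i
  rw [Matrix.smul_mulVec, Matrix.one_mulVec] at h1
  have h3 := congrFun h1 j
  simp only [Pi.smul_apply, Complex.real_smul, smul_eq_mul] at h3
  have h3' : (c:ℂ) * (hM.eigenvectorBasis i j) = l * hM.eigenvectorBasis i j := h3
  have h4 : ((c:ℂ) - l) * (hM.eigenvectorBasis i j) = 0 := by linear_combination h3'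
  rcases mul_eq_zero.mp h4 with h | h
  · have : (c:ℂ) = l := by linear_combination h
    exact_mod_cast this.symm
  · exact absurd h hj'

lemma vnEntropy_proj {ι : Type*} [Fintype ι] [DecidableEq ι] {M : Matrix ι ι ℂ}
    (hM : M.IsHermitian) (hproj : M * M = M) : vnEntropy M = 0 := by
  rw [vnEntropy, dif_pos hM, neg_eq_zero]
  refine Finset.sum_eq_zero fun i _ => ?_
  rcases eig_proj hM hproj i with h | h <;> simp [h]

lemma vnEntropy_half : vnEntropy (((1/2 : ℝ):ℂ) • (1 : Matrix (Fin 2) (Fin 2) ℂ)) = 1 := by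
  have hM : (((1/2 : ℝ):ℂ) • (1 : Matrix (Fin 2) (Fin 2) ℂ)).IsHermitian := by
    rw [Matrix.IsHermitian, Matrix.conjTranspose_smul, Matrix.conjTranspose_one]
    norm_num
  rw [vnEntropy, dif_pos hM]
  have hev : ∀ i, hM.eigenvalues i = (1/2 : ℝ) := fun i => eig_scalar i hM
  rw [Fin.sum_univ_two, hev 0, hev 1]
  have hlog : Real.logb 2 (1/2) = -1 := by
    rw [show (1/2 : ℝ) = 2⁻¹ by norm_num, Real.logb_inv, Real.logb_self_eq_one] <;> norm_num
  rw [hlog]; ring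

lemma vnEntropy_diag (x : ℝ) (hx : x = 0 ∨ x = 1) (y : ℝ) (hy : y = 0 ∨ y = 1) :
    vnEntropy (Matrix.of ![![(x:ℂ), 0], ![0, (y:ℂ)]]) = 0 := by
  refine vnEntropy_proj ?_ ?_
  · rw [Matrix.IsHermitian]
    ext a a'
    fin_cases a <;> fin_cases a' <;> simp [Matrix.conjTranspose_apply]
  · rcases hx with rfl | rfl <;> rcases hy with rfl | rfl <;> ext a a' <;>
      fin_cases a <;> fin_cases a' <;> norm_num [Matrix.mul_apply, Fin.sum_univ_two]

lemma entE_c0 {f : Fin 2 × Fin 2 → ℂ} (h01 : f (0,1) = 0) (h10 : f (1,0) = 0)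
    (h11 : f (1,1) = 0) (hn : Complex.normSq (f (0,0)) = 1) : entE f = 0 := by
  have h11' : f 1 = 0 := h11
  have hmat : (Matrix.of fun a a' => ∑ b, f (a, b) * star (f (a', b)))
      = Matrix.of ![![((Complex.normSq (f (0,0)) : ℝ) : ℂ), 0], ![0, ((0:ℝ):ℂ)]] := by
    ext a a'
    fin_cases a <;> fin_cases a' <;>
      simp [Fin.sum_univ_two, h01, h10, h11, h11', Complex.star_def, Complex.mul_conj]
  rw [entE, hmat]
  exact vnEntropy_diag _ (Or.inr hn) _ (Or.inl rfl)

lemma entE_c2 {f : Fin 2 × Fin 2 → ℂ} (h00 : f (0,0) = 0) (h01 : f (0,1) = 0)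
    (h10 : f (1,0) = 0) (hn : Complex.normSq (f (1,1)) = 1) : entE f = 0 := by
  have h00' : f 0 = 0 := h00
  have hmat : (Matrix.of fun a a' => ∑ b, f (a, b) * star (f (a', b)))
      = Matrix.of ![![((0:ℝ):ℂ), 0], ![0, ((Complex.normSq (f (1,1)) : ℝ) : ℂ)]] := by
    ext a a'
    fin_cases a <;> fin_cases a' <;>
      simp [Fin.sum_univ_two, h01, h10, h00, h00', Complex.star_def, Complex.mul_conj]
  rw [entE, hmat]
  exact vnEntropy_diag _ (Or.inl rfl) _ (Or.inr hn)

lemma entE_c1 {f : Fin 2 × Fin 2 → ℂ} (h00 : f (0,0) = 0) (h11 : f (1,1) = 0)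
    (hab : f (0,1) = f (1,0)) (hn : Complex.normSq (f (0,1)) = 1/2) : entE f = 1 := by
  have h00' : f 0 = 0 := h00
  have h11' : f 1 = 0 := h11
  have hmat : (Matrix.of fun a a' => ∑ b, f (a, b) * star (f (a', b)))
      = ((1/2 : ℝ):ℂ) • (1 : Matrix (Fin 2) (Fin 2) ℂ) := by
    ext a a'
    fin_cases a <;> fin_cases a' <;>
      simp [Fin.sum_univ_two, h00, h11, h00', h11', ← hab, Complex.star_def,
        Complex.mul_conj, hn, Matrix.one_apply]
  rw [entE, hmat]
  exact vnEntropy_half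

lemma siv_c0 {f : Fin 2 × Fin 2 → ℂ} (h10 : f (1,0) = 0) (h11 : f (1,1) = 0) :
    siv f = 0 := by
  have h11' : f 1 = 0 := h11
  simp [siv, Fintype.sum_prod_type, Fin.sum_univ_two, h10, h11, h11']

lemma siv_c2 {f : Fin 2 × Fin 2 → ℂ} (h10 : f (1,0) = 0)
    (hn : Complex.normSq (f (1,1)) = 1) : siv f = 0 := by
  have hn' : Complex.normSq (f 1) = 1 := hn
  simp [siv, Fintype.sum_prod_type, Fin.sum_univ_two, h10, hn, hn']

lemma siv_c1 {f : Fin 2 × Fin 2 → ℂ} (h11 : f (1,1) = 0)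
    (hn : Complex.normSq (f (1,0)) = 1/2) : siv f = 1 := by
  have h11' : f 1 = 0 := h11
  simp [siv, Fintype.sum_prod_type, Fin.sum_univ_two, h11, h11', hn]
  norm_num

lemma key {k : ℕ} {q : Fin k → ℝ} {ψ : Fin k → Fin 2 × Fin 2 → ℂ}
    (h : IsSSRDecomp rhoSep q ψ) :
    ∑ i, q i * entE (ψ i) = 1/2 ∧ ∑ i, q i * siv (ψ i) = 1/2 := by
  obtain ⟨hq, hnorm, hc, hrho⟩ := h
  have hE : ∀ p r : Fin 2 × Fin 2,
      rhoSep p r = ∑ i, (q i : ℂ) * (ψ i p * star (ψ i r)) := by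
    intro p r
    have := congrFun (congrFun hrho p) r
    simpa [Matrix.sum_apply, outer] using this
  have E1 : ∑ i, q i * Complex.normSq (ψ i (0,1)) = 1/4 := by
    have h1 := hE (0,1) (0,1)
    have h0 : rhoSep ((0:Fin 2), (1:Fin 2)) ((0:Fin 2), (1:Fin 2)) = 1/4 := by
      simp [rhoSep]
    rw [h0] at h1
    have h2 : ((∑ i, q i * Complex.normSq (ψ i (0,1)) : ℝ) : ℂ)
        = ∑ i, (q i : ℂ) * (ψ i (0,1) * star (ψ i (0,1))) := by
      push_cast
      exact Finset.sum_congr rfl fun i _ => by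
        rw [Complex.star_def, Complex.mul_conj]
    have h3 := h2.trans h1.symm
    rw [show (1/4:ℂ) = ((1/4:ℝ):ℂ) by norm_num] at h3
    exact_mod_cast h3
  have E2 : ∑ i, q i * Complex.normSq (ψ i (1,0)) = 1/4 := by
    have h1 := hE (1,0) (1,0)
    have h0 : rhoSep ((1:Fin 2), (0:Fin 2)) ((1:Fin 2), (0:Fin 2)) = 1/4 := by
      simp [rhoSep]
    rw [h0] at h1
    have h2 : ((∑ i, q i * Complex.normSq (ψ i (1,0)) : ℝ) : ℂ)
        = ∑ i, (q i : ℂ) * (ψ i (1,0) * star (ψ i (1,0))) := by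
      push_cast
      exact Finset.sum_congr rfl fun i _ => by
        rw [Complex.star_def, Complex.mul_conj]
    have h3 := h2.trans h1.symm
    rw [show (1/4:ℂ) = ((1/4:ℝ):ℂ) by norm_num] at h3
    exact_mod_cast h3
  have E3 : ∑ i, q i * (ψ i (0,1) * (starRingEnd ℂ) (ψ i (1,0))).re = 1/4 := by
    have h1 := hE (0,1) (1,0)
    have h0 : rhoSep ((0:Fin 2), (1:Fin 2)) ((1:Fin 2), (0:Fin 2)) = 1/4 := by
      simp [rhoSep]
    rw [h0] at h1
    have := congrArg Complex.re h1
    simpa [Complex.re_sum, Complex.re_ofReal_mul, Complex.star_def] using this.symm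
  have hzero : ∑ i, q i * Complex.normSq (ψ i (0,1) - ψ i (1,0)) = 0 := by
    have hterm : ∀ i : Fin k, q i * Complex.normSq (ψ i (0,1) - ψ i (1,0))
        = q i * Complex.normSq (ψ i (0,1)) + q i * Complex.normSq (ψ i (1,0))
          - 2 * (q i * (ψ i (0,1) * (starRingEnd ℂ) (ψ i (1,0))).re) := by
      intro i
      rw [Complex.normSq_sub]
      ring
    rw [Finset.sum_congr rfl fun i _ => hterm i]
    rw [Finset.sum_sub_distrib, Finset.sum_add_distrib, ← Finset.mul_sum, E1, E2, E3]
    norm_num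
  have hab : ∀ i, q i ≠ 0 → ψ i (0,1) = ψ i (1,0) := by
    intro i hi
    have h0 := (Finset.sum_eq_zero_iff_of_nonneg
      (fun i _ => mul_nonneg (hq i) (Complex.normSq_nonneg _))).mp hzero i
      (Finset.mem_univ i)
    rcases mul_eq_zero.mp h0 with h | h
    · exact absurd h hi
    · exact sub_eq_zero.mp (Complex.normSq_eq_zero.mp h)
  have hpt : ∀ i : Fin k,
      q i * entE (ψ i) = q i * (Complex.normSq (ψ i (0,1)) + Complex.normSq (ψ i (1,0))) ∧
      q i * siv (ψ i) = q i * (Complex.normSq (ψ i (0,1)) + Complex.normSq (ψ i (1,0))) := by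
    intro i
    rcases eq_or_ne (q i) 0 with h0 | h0
    · simp [h0]
    obtain ⟨c, hcc⟩ := hc i
    have hn := hnorm i
    rw [Fintype.sum_prod_type, Fin.sum_univ_two, Fin.sum_univ_two, Fin.sum_univ_two] at hn
    match c with
    | 0 =>
      have z01 : ψ i (0,1) = 0 := hcc (0,1) (by decide)
      have z10 : ψ i (1,0) = 0 := hcc (1,0) (by decide)
      have z11 : ψ i (1,1) = 0 := hcc (1,1) (by decide)
      rw [z01, z10, z11] at hn
      simp at hn
      rw [entE_c0 z01 z10 z11 hn, siv_c0 z10 z11, z01, z10]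
      simp
    | 1 =>
      have z00 : ψ i (0,0) = 0 := hcc (0,0) (by decide)
      have z11 : ψ i (1,1) = 0 := hcc (1,1) (by decide)
      have heq := hab i h0
      rw [z00, z11] at hn
      simp [heq] at hn
      have hh : Complex.normSq (ψ i (1,0)) = 1/2 := by linarith
      have hh' : Complex.normSq (ψ i (0,1)) = 1/2 := by rw [heq]; exact hh
      rw [entE_c1 z00 z11 heq hh', siv_c1 z11 hh, hh, hh']
      norm_num
    | 2 =>
      have z00 : ψ i (0,0) = 0 := hcc (0,0) (by decide)
      have z01 : ψ i (0,1) = 0 := hcc (0,1) (by decide)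
      have z10 : ψ i (1,0) = 0 := hcc (1,0) (by decide)
      rw [z00, z01, z10] at hn
      simp at hn
      rw [entE_c2 z00 z01 z10 hn, siv_c2 z10 hn, z01, z10]
      simp
    | (n+3) =>
      exfalso
      have z00 : ψ i (0,0) = 0 := hcc (0,0) (by simp)
      have z01 : ψ i (0,1) = 0 := hcc (0,1) (by simp)
      have z10 : ψ i (1,0) = 0 := hcc (1,0) (by simp)
      have z11 : ψ i (1,1) = 0 := hcc (1,1) (by simp)
      rw [z00, z01, z10, z11] at hn
      simp at hn
  have hsum : ∑ i, q i * (Complex.normSq (ψ i (0,1)) + Complex.normSq (ψ i (1,0)))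
      = 1/2 := by
    have hma : ∀ i : Fin k, q i * (Complex.normSq (ψ i (0,1)) + Complex.normSq (ψ i (1,0)))
        = q i * Complex.normSq (ψ i (0,1)) + q i * Complex.normSq (ψ i (1,0)) :=
      fun i => mul_add _ _ _
    rw [Finset.sum_congr rfl fun i _ => hma i, Finset.sum_add_distrib, E1, E2]
    norm_num
  constructor
  · rw [Finset.sum_congr rfl fun i _ => (hpt i).1]; exact hsum
  · rw [Finset.sum_congr rfl fun i _ => (hpt i).2]; exact hsum

noncomputable def f0 : Fin 2 × Fin 2 → ℂ := fun p => if p = (0,0) then 1 else 0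
noncomputable def f1 : Fin 2 × Fin 2 → ℂ :=
  fun p => if p = (0,1) ∨ p = (1,0) then (((Real.sqrt 2)⁻¹ : ℝ) : ℂ) else 0
noncomputable def f2 : Fin 2 × Fin 2 → ℂ := fun p => if p = (1,1) then 1 else 0

lemma sqrt2_mul : ((Real.sqrt 2)⁻¹ : ℝ) * (Real.sqrt 2)⁻¹ = 1/2 := by
  rw [← mul_inv, Real.mul_self_sqrt] <;> norm_num

lemma sqrt2_mulC : (((Real.sqrt 2 : ℝ) : ℂ))⁻¹ * ((Real.sqrt 2 : ℝ) : ℂ)⁻¹ = 1/2 := by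
  rw [← mul_inv, ← Complex.ofReal_mul, Real.mul_self_sqrt (by norm_num)]
  norm_num

noncomputable def myQ : Fin 3 → ℝ := fun i => if i = 1 then 1/2 else 1/4
noncomputable def myPsi : Fin 3 → Fin 2 × Fin 2 → ℂ :=
  fun i => if i = 0 then f0 else if i = 1 then f1 else f2

lemma myDecomp : IsSSRDecomp rhoSep myQ myPsi := by
  refine ⟨?_, ?_, ?_, ?_⟩
  · intro i; unfold myQ; split <;> norm_num
  · intro i
    fin_cases i <;>
      simp [myPsi, f0, f1, f2, Fintype.sum_prod_type, Fin.sum_univ_two,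
        Complex.normSq_ofReal, sqrt2_mul, Prod.ext_iff] <;> norm_num <;> decide
  · intro i
    fin_cases i
    · exact ⟨0, fun p hp => by fin_cases p <;> simp_all [myPsi, f0] <;> decide⟩
    · exact ⟨1, fun p hp => by fin_cases p <;> simp_all [myPsi, f1] <;> decide⟩
    · exact ⟨2, fun p hp => by fin_cases p <;> simp_all [myPsi, f2] <;> decide⟩
  · ext p r
    fin_cases p <;> fin_cases r <;>
      simp [rhoSep, Matrix.sum_apply, Fin.sum_univ_three, outer, myQ, myPsi, f0, f1, f2,
        Prod.ext_iff, Complex.star_def, Complex.conj_ofReal, sqrt2_mulC] <;>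
      norm_num [sqrt2_mulC]

end Aux

/-- Every SSR-compatible pure-state decomposition of `ρ_sep` has average
entanglement at least `1/2` and average SiV at least `1/2`, and both values
are attained: `E_F^SSR(ρ_sep) = 1/2` and `V_F^SSR(ρ_sep) = 1/2`. -/
theorem rhoSep_formation :
    (∀ (k : ℕ) (q : Fin k → ℝ) (ψ : Fin k → Fin 2 × Fin 2 → ℂ),
      IsSSRDecomp rhoSep q ψ →
        (1 / 2 : ℝ) ≤ ∑ i, q i * entE (ψ i) ∧
        (1 / 2 : ℝ) ≤ ∑ i, q i * siv (ψ i)) ∧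
    (∃ (k : ℕ) (q : Fin k → ℝ) (ψ : Fin k → Fin 2 × Fin 2 → ℂ),
      IsSSRDecomp rhoSep q ψ ∧
        ∑ i, q i * entE (ψ i) = (1 / 2 : ℝ) ∧
        ∑ i, q i * siv (ψ i) = (1 / 2 : ℝ)) := by
  constructor
  · intro k q ψ h
    obtain ⟨h1, h2⟩ := key h
    exact ⟨le_of_eq h1.symm, le_of_eq h2.symm⟩
  · exact ⟨3, myQ, myPsi, myDecomp, (key myDecomp).1, (key myDecomp).2⟩
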